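/- Let a ∈ ℕ^m admit a bipartite graph with non-increasing b ∈ ℕ^n. Suppose the vertex b_1 connects to the b_1 largest-degree vertices of a (ties broken arbitrarily), i.e., greedily from the highest degree group downward. Then the updated degree sequences (a with those entries decremented, zeros removed; b without b_1) again admit a bipartite graph. -/
import Mathlib

lemma card_filter_succ (n : ℕ) (p : Fin (n+1) → Prop) [DecidablePred p] :
    (Finset.univ.filter p).card =
      (if p 0 then 1 else 0) + (Finset.univ.filter (fun j : Fin n => p j.succ)).card := by
  rw [Finset.card_filter, Finset.card_filter, Fin.sum_univ_succ]

lemma key (m n : ℕ) (a : Fin m → ℕ) (b : Fin (n+1) → ℕ) (S : Finset (Fin m))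
    (hmax : ∀ i ∈ S, ∀ i' ∉ S, a i' ≤ a i) (hScard : S.card = b 0) :
    ∀ k (M : Fin m → Fin (n+1) → Bool),
    (∀ i, (Finset.univ.filter (fun j => M i j = true)).card = a i) →
    (∀ j, (Finset.univ.filter (fun i => M i j = true)).card = b j) →
    (S \ Finset.univ.filter (fun i => M i 0 = true)).card = k →
    ∃ M' : Fin m → Fin (n+1) → Bool,
      (∀ i, (Finset.univ.filter (fun j => M' i j = true)).card = a i) ∧
      (∀ j, (Finset.univ.filter (fun i => M' i j = true)).card = b j) ∧
      (∀ i, (M' i 0 = true) ↔ i ∈ S) := by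
  intro k
  induction k with
  | zero =>
    intro M hrow hcol hk
    set T := Finset.univ.filter (fun i => M i 0 = true) with hT
    have hsub : S ⊆ T := by
      rwa [Finset.card_eq_zero, Finset.sdiff_eq_empty_iff_subset] at hk
    have hTS : T.card = S.card := by rw [hScard, ← hcol 0]
    have hST : S = T := Finset.eq_of_subset_of_card_le hsub (le_of_eq hTS)
    refine ⟨M, hrow, hcol, fun i => ?_⟩
    rw [hST]
    simp [hT]
  | succ k ih =>
    intro M hrow hcol hk
    set T := Finset.univ.filter (fun i => M i 0 = true) with hT
    have hTcard : T.card = b 0 := hcol 0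
    have hne : (S \ T).Nonempty := by rw [← Finset.card_pos, hk]; omega
    obtain ⟨i₀, hi₀⟩ := hne
    have hi₀S : i₀ ∈ S := (Finset.mem_sdiff.mp hi₀).1
    have hi₀T : i₀ ∉ T := (Finset.mem_sdiff.mp hi₀).2
    have hcomm : (T \ S).card = (S \ T).card :=
      Finset.card_sdiff_comm (by rw [hTcard, hScard])
    have hne' : (T \ S).Nonempty := by rw [← Finset.card_pos, hcomm, hk]; omega
    obtain ⟨i₁, hi₁⟩ := hne'
    have hi₁T : i₁ ∈ T := (Finset.mem_sdiff.mp hi₁).1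
    have hi₁S : i₁ ∉ S := (Finset.mem_sdiff.mp hi₁).2
    have hii : i₀ ≠ i₁ := fun h => hi₁S (h ▸ hi₀S)
    have hM₀ : M i₀ 0 = false := by
      simpa [hT, Bool.not_eq_true] using hi₀T
    have hM₁ : M i₁ 0 = true := by simpa [hT] using hi₁T
    have hle : a i₁ ≤ a i₀ := hmax i₀ hi₀S i₁ hi₁S
    -- counts over succ columns
    have hc₀ : (Finset.univ.filter (fun j : Fin n => M i₀ j.succ = true)).card = a i₀ := by
      have := card_filter_succ n (fun j => M i₀ j = true)
      rw [hrow i₀] at this; rw [hM₀] at this; simpa using this.symm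
    have hc₁ : 1 + (Finset.univ.filter (fun j : Fin n => M i₁ j.succ = true)).card = a i₁ := by
      have := card_filter_succ n (fun j => M i₁ j = true)
      rw [hrow i₁] at this; rw [hM₁] at this; simpa using this.symm
    -- find the swap column
    have hex : ∃ j₀ : Fin n, M i₀ j₀.succ = true ∧ M i₁ j₀.succ = false := by
      by_contra hcon
      push_neg at hcon
      have hsub : (Finset.univ.filter (fun j : Fin n => M i₀ j.succ = true)) ⊆
          (Finset.univ.filter (fun j : Fin n => M i₁ j.succ = true)) := by
        intro j hj
        simp only [Finset.mem_filter, Finset.mem_univ, true_and] at hj ⊢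
        have := hcon j hj
        revert this
        cases M i₁ j.succ <;> simp
      have := Finset.card_le_card hsub
      omega
    obtain ⟨j₀, hj₀, hj₁⟩ := hex
    have h0succ : (0 : Fin (n+1)) ≠ j₀.succ := (Fin.succ_ne_zero j₀).symm
    -- the swapped matrix
    set M' : Fin m → Fin (n+1) → Bool := fun i j =>
      if i = i₀ then (if j = 0 then true else if j = j₀.succ then false else M i j)
      else if i = i₁ then (if j = 0 then false else if j = j₀.succ then true else M i j)
      else M i j with hM'
    -- row counts
    have hrow' : ∀ i, (Finset.univ.filter (fun j => M' i j = true)).card = a i := by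
      intro i
      rcases eq_or_ne i i₀ with rfl | hni0
      · have hset : Finset.univ.filter (fun j => M' i j = true) =
            insert (0 : Fin (n+1)) ((Finset.univ.filter (fun j => M i j = true)).erase j₀.succ) := by
          ext j
          rcases eq_or_ne j 0 with rfl | hj0
          · simp [hM', h0succ]
          · rcases eq_or_ne j j₀.succ with rfl | hjs
            · simp [hM', hj0]
            · simp [hM', hj0, hjs]
        rw [hset, Finset.card_insert_of_notMem, Finset.card_erase_of_mem]
        · rw [hrow i]
          have : 1 ≤ a i := by
            rw [← hrow i]
            exact Finset.card_pos.mpr ⟨j₀.succ, by simp [hj₀]⟩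
          omega
        · simp [hj₀]
        · simp [hM₀]
      rcases eq_or_ne i i₁ with rfl | hni1
      · have hset : Finset.univ.filter (fun j => M' i j = true) =
            insert j₀.succ ((Finset.univ.filter (fun j => M i j = true)).erase 0) := by
          ext j
          rcases eq_or_ne j 0 with rfl | hj0
          · simp [hM', hii.symm, h0succ]
          · rcases eq_or_ne j j₀.succ with rfl | hjs
            · simp [hM', hii.symm, hj0]
            · simp [hM', hii.symm, hj0, hjs]
        rw [hset, Finset.card_insert_of_notMem, Finset.card_erase_of_mem]
        · rw [hrow i]; omega
        · simp [hM₁]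
        · simp [hj₁]
      · have hset : Finset.univ.filter (fun j => M' i j = true) =
            Finset.univ.filter (fun j => M i j = true) := by
          ext j; simp [hM', hni0, hni1]
        rw [hset, hrow i]
    -- column counts
    have hcol0set : Finset.univ.filter (fun i => M' i 0 = true) = insert i₀ (T.erase i₁) := by
      ext i
      rcases eq_or_ne i i₀ with rfl | hni0
      · simp [hM', h0succ]
      rcases eq_or_ne i i₁ with rfl | hni1
      · simp [hM', hii.symm, hni0, hii]
      · simp [hM', hT, hni0, hni1]
    have hcol' : ∀ j, (Finset.univ.filter (fun i => M' i j = true)).card = b j := by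
      intro j
      rcases eq_or_ne j 0 with rfl | hj0
      · have hnot : i₀ ∉ T.erase i₁ := fun h => hi₀T (Finset.mem_of_mem_erase h)
        have h1 : 1 ≤ T.card := Finset.card_pos.mpr ⟨i₁, hi₁T⟩
        rw [hcol0set, Finset.card_insert_of_notMem hnot, Finset.card_erase_of_mem hi₁T]
        omega
      rcases eq_or_ne j j₀.succ with rfl | hjs
      · have hset : Finset.univ.filter (fun i => M' i j₀.succ = true) =
            insert i₁ ((Finset.univ.filter (fun i => M i j₀.succ = true)).erase i₀) := by
          ext i
          rcases eq_or_ne i i₀ with rfl | hni0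
          · simp [hM', Fin.succ_ne_zero, hii]
          rcases eq_or_ne i i₁ with rfl | hni1
          · simp [hM', hii.symm, Fin.succ_ne_zero]
          · simp [hM', hni0, hni1]
        have hmem : i₀ ∈ Finset.univ.filter (fun i => M i j₀.succ = true) := by simp [hj₀]
        have h1 : 1 ≤ (Finset.univ.filter (fun i => M i j₀.succ = true)).card :=
          Finset.card_pos.mpr ⟨i₀, hmem⟩
        have hnot : i₁ ∉ (Finset.univ.filter (fun i => M i j₀.succ = true)).erase i₀ := by
          simp [hj₁]
        rw [hset, Finset.card_insert_of_notMem hnot, Finset.card_erase_of_mem hmem]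
        have := hcol j₀.succ
        omega
      · have hset : Finset.univ.filter (fun i => M' i j = true) =
            Finset.univ.filter (fun i => M i j = true) := by
          ext i
          rcases eq_or_ne i i₀ with rfl | hni0
          · simp [hM', hj0, hjs]
          rcases eq_or_ne i i₁ with rfl | hni1
          · simp [hM', hii.symm, hj0, hjs]
          · simp [hM', hni0, hni1]
        rw [hset, hcol j]
    -- new mismatch count drops
    have hnewT : Finset.univ.filter (fun i => M' i 0 = true) = insert i₀ (T.erase i₁) := hcol0set
    have hsd : S \ (insert i₀ (T.erase i₁)) = (S \ T).erase i₀ := by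
      ext i
      simp only [Finset.mem_sdiff, Finset.mem_insert, Finset.mem_erase, Finset.mem_sdiff]
      constructor
      · rintro ⟨hiS, h⟩
        push_neg at h
        exact ⟨h.1, hiS, fun hiT => (h.2 (fun h' => hi₁S (h' ▸ hiS)) hiT)⟩
      · rintro ⟨hni, hiS, hiT⟩
        refine ⟨hiS, ?_⟩
        push_neg
        exact ⟨hni, fun _ => hiT⟩
    have hkk : (S \ Finset.univ.filter (fun i => M' i 0 = true)).card = k := by
      rw [hnewT, hsd, Finset.card_erase_of_mem hi₀, hk]
      omega
    exact ih M' hrow' hcol' hkk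

/-- There is a bipartite graph with degree sequences `a` and `b`. -/
def hasBG (m n : ℕ) (a : Fin m → ℕ) (b : Fin n → ℕ) : Prop :=
  ∃ M : Fin m → Fin n → Bool,
    (∀ i, (Finset.univ.filter (fun j => M i j = true)).card = a i) ∧
    (∀ j, (Finset.univ.filter (fun i => M i j = true)).card = b j)

/-- Standard greedy step: if `(a, b)` is feasible (`b` non-increasing) and the node `b 0`
is connected to a set `S` of `b 0` vertices of largest degree on the `a`-side (ties broken
arbitrarily), then the updated degree sequences again admit a bipartite graph. -/
theorem stmt4 (m n : ℕ) (a : Fin m → ℕ) (b : Fin (n + 1) → ℕ)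
    (hb : Antitone b) (hfeas : hasBG m (n + 1) a b)
    (S : Finset (Fin m)) (hcard : S.card = b 0)
    (hmax : ∀ i ∈ S, ∀ i' ∉ S, a i' ≤ a i) :
    hasBG m n (fun i => a i - (if i ∈ S then 1 else 0)) (fun j => b j.succ) := by
  obtain ⟨M, hrow, hcol⟩ := hfeas
  obtain ⟨M', hrow', hcol', hS⟩ :=
    key m n a b S hmax hcard (S \ Finset.univ.filter (fun i => M i 0 = true)).card
      M hrow hcol rfl
  refine ⟨fun i j => M' i j.succ, fun i => ?_, fun j => hcol' j.succ⟩
  have := card_filter_succ n (fun j => M' i j = true)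
  rw [hrow' i] at this
  by_cases hi : i ∈ S
  · rw [if_pos ((hS i).mpr hi)] at this
    simp only [if_pos hi]
    omega
  · have : ¬ (M' i 0 = true) := fun h => hi ((hS i).mp h)
    rw [if_neg this] at *
    simp only [if_neg hi]
    omega
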